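/- Let I and J be intervals of ℝ, let u : J → I be a C¹ function, and let x₀ be an interior point of J. If f : I → ℝ is strictly C^{0,α} at u(x₀) for some α > 0 and u′(x₀) ≠ 0, then the composition f∘u is strictly C^{0,α} at x₀. -/

import Mathlib

open Set Filter Topology

/-- `f` is strictly `C^{0,α}` at `x₀`, relative to the set `I`:
`limsup_{x→x₀, x ∈ I} |f x - f x₀|/|x-x₀|^α < ∞` and, for every `β > α`,
`limsup_{x→x₀, x ∈ I} |f x - f x₀|/|x-x₀|^β = ∞`. -/
def StrictHolderAt (f : ℝ → ℝ) (I : Set ℝ) (α x₀ : ℝ) : Prop :=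
  (∃ M : ℝ, ∀ᶠ x in 𝓝[I \ {x₀}] x₀, |f x - f x₀| / |x - x₀| ^ α ≤ M) ∧
  ∀ β : ℝ, α < β → ∀ M : ℝ, ∃ᶠ x in 𝓝[I \ {x₀}] x₀, M < |f x - f x₀| / |x - x₀| ^ β

/-- If `u : J → I` is `C¹`, `x₀` is interior to `J`, `f` is strictly `C^{0,α}` at
`u x₀` (relative to `I`), and `u' x₀ ≠ 0`, then `f ∘ u` is strictly `C^{0,α}` at `x₀`
(relative to `J`). -/
theorem strictHolderAt_comp_of_deriv_ne_zero (I J : Set ℝ) (hI : I.OrdConnected)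
    (hJ : J.OrdConnected) (u : ℝ → ℝ) (hu : ContDiffOn ℝ 1 u J) (huJI : MapsTo u J I)
    (x₀ : ℝ) (hx₀ : x₀ ∈ interior J) (α : ℝ) (hα : 0 < α) (f : ℝ → ℝ)
    (hf : StrictHolderAt f I α (u x₀)) (hu' : deriv u x₀ ≠ 0) :
    StrictHolderAt (f ∘ u) J α x₀ := by
  have hJn : J ∈ 𝓝 x₀ := mem_interior_iff_mem_nhds.mp hx₀
  have hcd : ContDiffAt ℝ 1 u x₀ := hu.contDiffAt hJn
  have hsd : HasStrictDerivAt u (deriv u x₀) x₀ := hcd.hasStrictDerivAt one_ne_zero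
  have F := hsd.hasStrictFDerivAt_equiv hu'
  set g : ℝ → ℝ := F.localInverse u _ x₀ with hgdef
  have hgl : ∀ᶠ x in 𝓝 x₀, g (u x) = x := F.eventually_left_inverse
  have hgr : ∀ᶠ y in 𝓝 (u x₀), u (g y) = y := F.eventually_right_inverse
  have hgx₀ : g (u x₀) = x₀ := hgl.self_of_nhds
  have hgt : Tendsto g (𝓝 (u x₀)) (𝓝 x₀) := F.localInverse_tendsto
  -- upper bound for u
  obtain ⟨C₂, hC₂, hC₂'⟩ := F.hasFDerivAt.isBigO_sub.exists_pos
  have hub : ∀ᶠ x in 𝓝 x₀, |u x - u x₀| ≤ C₂ * |x - x₀| := by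
    have := hC₂'.bound
    simpa [Real.norm_eq_abs] using this
  -- upper bound for g
  have hgb : (fun y => g y - x₀) =O[𝓝 (u x₀)] fun y => y - u x₀ := by
    have := F.to_localInverse.hasFDerivAt.isBigO_sub
    simpa [hgx₀] using this
  obtain ⟨C₁, hC₁, hC₁'⟩ := hgb.exists_pos
  have hgub : ∀ᶠ y in 𝓝 (u x₀), |g y - x₀| ≤ C₁ * |y - u x₀| := by
    have := hC₁'.bound
    simpa [Real.norm_eq_abs] using this
  -- u maps the punctured neighborhood filter into the punctured neighborhood filter
  have hut : Tendsto u (𝓝[J \ {x₀}] x₀) (𝓝[I \ {u x₀}] (u x₀)) := by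
    rw [tendsto_nhdsWithin_iff]
    constructor
    · exact (HasStrictDerivAt.hasDerivAt hsd).continuousAt.continuousWithinAt.tendsto
    · filter_upwards [eventually_mem_nhdsWithin, hgl.filter_mono nhdsWithin_le_nhds]
        with x hx hglx
      refine ⟨huJI hx.1, ?_⟩
      simp only [mem_singleton_iff] at hx ⊢
      intro h
      apply hx.2
      rw [← hglx, h, hgx₀]
      exact mem_singleton _
  constructor
  · -- the bounded part
    obtain ⟨M, hM⟩ := hf.1
    refine ⟨C₂ ^ α * max M 0, ?_⟩
    filter_upwards [hut.eventually hM, hub.filter_mono nhdsWithin_le_nhds,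
      eventually_mem_nhdsWithin, hgl.filter_mono nhdsWithin_le_nhds]
      with x h1 h2 h3 h4
    have hxne : x ≠ x₀ := by simpa using h3.2
    have hune : u x ≠ u x₀ := by
      intro h
      apply hxne
      rw [← h4, h, hgx₀]
    have hx0 : (0:ℝ) < |x - x₀| := abs_pos.mpr (sub_ne_zero.mpr hxne)
    have hu0 : (0:ℝ) < |u x - u x₀| := abs_pos.mpr (sub_ne_zero.mpr hune)
    have hxα : (0:ℝ) < |x - x₀| ^ α := Real.rpow_pos_of_pos hx0 α
    have huα : (0:ℝ) < |u x - u x₀| ^ α := Real.rpow_pos_of_pos hu0 α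
    have hnum : |f (u x) - f (u x₀)| ≤ max M 0 * |u x - u x₀| ^ α := by
      have := (div_le_iff₀ huα).mp h1
      calc |f (u x) - f (u x₀)| ≤ M * |u x - u x₀| ^ α := this
        _ ≤ max M 0 * |u x - u x₀| ^ α := by
            apply mul_le_mul_of_nonneg_right (le_max_left M 0) huα.le
    have hpow : |u x - u x₀| ^ α ≤ C₂ ^ α * |x - x₀| ^ α := by
      calc |u x - u x₀| ^ α ≤ (C₂ * |x - x₀|) ^ α :=
            Real.rpow_le_rpow (abs_nonneg _) h2 hα.le
        _ = C₂ ^ α * |x - x₀| ^ α := Real.mul_rpow hC₂.le (abs_nonneg _)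
    rw [div_le_iff₀ hxα]
    calc |(f ∘ u) x - (f ∘ u) x₀| = |f (u x) - f (u x₀)| := rfl
      _ ≤ max M 0 * |u x - u x₀| ^ α := hnum
      _ ≤ max M 0 * (C₂ ^ α * |x - x₀| ^ α) :=
          mul_le_mul_of_nonneg_left hpow (le_max_right M 0)
      _ = C₂ ^ α * max M 0 * |x - x₀| ^ α := by ring
  · -- the unbounded part
    intro β hβ M
    have hβ0 : (0:ℝ) < β := hα.trans hβ
    have hfreq := hf.2 β hβ (max M 0 * C₁ ^ β)
    -- g maps punctured neighborhoods to punctured neighborhoods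
    have hgt' : Tendsto g (𝓝[I \ {u x₀}] (u x₀)) (𝓝[J \ {x₀}] x₀) := by
      rw [tendsto_nhdsWithin_iff]
      refine ⟨hgt.mono_left nhdsWithin_le_nhds, ?_⟩
      filter_upwards [eventually_mem_nhdsWithin,
        hgr.filter_mono nhdsWithin_le_nhds,
        ((hgt.eventually_mem hJn).filter_mono nhdsWithin_le_nhds)]
        with y hy hgry hgJ
      refine ⟨hgJ, ?_⟩
      simp only [mem_singleton_iff] at hy ⊢
      intro h
      apply hy.2
      rw [← hgry, h]
      exact mem_singleton _
    have key : ∀ᶠ y in 𝓝[I \ {u x₀}] (u x₀),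
        (max M 0 * C₁ ^ β < |f y - f (u x₀)| / |y - u x₀| ^ β) →
        M < |(f ∘ u) (g y) - (f ∘ u) x₀| / |g y - x₀| ^ β := by
      filter_upwards [eventually_mem_nhdsWithin,
        hgr.filter_mono nhdsWithin_le_nhds,
        hgub.filter_mono nhdsWithin_le_nhds]
        with y hy hgry hgu hlt
      have hyne : y ≠ u x₀ := by simpa using hy.2
      have hy0 : (0:ℝ) < |y - u x₀| := abs_pos.mpr (sub_ne_zero.mpr hyne)
      have hyβ : (0:ℝ) < |y - u x₀| ^ β := Real.rpow_pos_of_pos hy0 β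
      have hgyne : g y ≠ x₀ := by
        intro h
        apply hyne
        rw [← hgry, h]
      have hg0 : (0:ℝ) < |g y - x₀| := abs_pos.mpr (sub_ne_zero.mpr hgyne)
      have hgβ : (0:ℝ) < |g y - x₀| ^ β := Real.rpow_pos_of_pos hg0 β
      have hnum : max M 0 * C₁ ^ β * |y - u x₀| ^ β < |f y - f (u x₀)| :=
        (lt_div_iff₀ hyβ).mp hlt
      have hpow : |g y - x₀| ^ β ≤ C₁ ^ β * |y - u x₀| ^ β := by
        calc |g y - x₀| ^ β ≤ (C₁ * |y - u x₀|) ^ β :=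
              Real.rpow_le_rpow (abs_nonneg _) hgu hβ0.le
          _ = C₁ ^ β * |y - u x₀| ^ β := Real.mul_rpow hC₁.le (abs_nonneg _)
      have : max M 0 * |g y - x₀| ^ β < |f y - f (u x₀)| := by
        calc max M 0 * |g y - x₀| ^ β ≤ max M 0 * (C₁ ^ β * |y - u x₀| ^ β) :=
              mul_le_mul_of_nonneg_left hpow (le_max_right M 0)
          _ = max M 0 * C₁ ^ β * |y - u x₀| ^ β := by ring
          _ < |f y - f (u x₀)| := hnum
      have hM' : max M 0 < |f y - f (u x₀)| / |g y - x₀| ^ β := (lt_div_iff₀ hgβ).mpr this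
      have : |f y - f (u x₀)| = |(f ∘ u) (g y) - (f ∘ u) x₀| := by
        simp [Function.comp, hgry]
      rw [this] at hM'
      exact lt_of_le_of_lt (le_max_left M 0) hM'
    exact hgt'.frequently (hfreq.mp key)
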